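/- Let Ψ : (0, ∞) → (0, ∞) be an increasing function such that lim_{x→∞} Ψ(x)/Ψ(x−1) = ∞. Then lim_{x→∞} (∫_x^∞ du/Ψ(u)) / (∫_x^{x+1} du/Ψ(u)) = 1. -/

import Mathlib

open Filter MeasureTheory
open scoped Topology

lemma psi_aesm (Ψ : ℝ → ℝ) (hmono : StrictMonoOn Ψ (Set.Ioi 0))
    {s : Set ℝ} (hsub : s ⊆ Set.Ioi 0) :
    AEStronglyMeasurable (fun u => 1 / Ψ u) ((volume : Measure ℝ).restrict s) := by
  have h1 : AEMeasurable Ψ ((volume : Measure ℝ).restrict (Set.Ioi 0)) :=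
    aemeasurable_restrict_of_monotoneOn measurableSet_Ioi hmono.monotoneOn
  have h2 : AEMeasurable Ψ ((volume : Measure ℝ).restrict s) :=
    h1.mono_measure (Measure.restrict_mono hsub le_rfl)
  exact (aemeasurable_const.div h2).aestronglyMeasurable

lemma psi_int_Ioc (Ψ : ℝ → ℝ) (hpos : ∀ x > (0 : ℝ), 0 < Ψ x)
    (hmono : StrictMonoOn Ψ (Set.Ioi 0)) {a : ℝ} (b : ℝ) (ha : 0 < a) :
    IntegrableOn (fun u => 1 / Ψ u) (Set.Ioc a b) := by
  refine Integrable.mono' (g := fun _ => 1 / Ψ a)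
    (integrableOn_const measure_Ioc_lt_top.ne)
    (psi_aesm Ψ hmono (fun u hu => lt_trans ha hu.1)) ?_
  filter_upwards [ae_restrict_mem measurableSet_Ioc] with u hu
  have hu0 : 0 < u := lt_trans ha hu.1
  have h1 : Ψ a < Ψ u := hmono ha hu0 hu.1
  have h2 : 0 < Ψ u := hpos u hu0
  rw [Real.norm_eq_abs, abs_of_nonneg (by positivity)]
  exact one_div_le_one_div_of_le (hpos a ha) h1.le

/-- If `Ψ : (0,∞) → (0,∞)` is increasing with `Ψ(x)/Ψ(x−1) → ∞` as `x → ∞`, then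
`(∫_x^∞ du/Ψ(u)) / (∫_x^{x+1} du/Ψ(u)) → 1` as `x → ∞`. -/
theorem tendsto_ratio_integral_inv_of_superexp
    (Ψ : ℝ → ℝ) (hpos : ∀ x > (0 : ℝ), 0 < Ψ x)
    (hmono : StrictMonoOn Ψ (Set.Ioi 0))
    (hsuper : Tendsto (fun x : ℝ => Ψ x / Ψ (x - 1)) atTop atTop) :
    Tendsto (fun x : ℝ =>
        (∫ u in Set.Ioi x, 1 / Ψ u) / ∫ u in Set.Ioc x (x + 1), 1 / Ψ u)
      atTop (𝓝 1) := by
  set f : ℝ → ℝ := fun u => 1 / Ψ u with hfdef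
  rw [Metric.tendsto_nhds]
  intro ε hε
  set M : ℝ := max 2 (1 + 2 / ε) with hMdef
  have hM1 : (1:ℝ) < M := lt_of_lt_of_le one_lt_two (le_max_left _ _)
  have hM1' : M - 1 ≠ 0 := by linarith
  have hM0 : (0:ℝ) < M := by linarith
  obtain ⟨X, hX⟩ := eventually_atTop.1 (hsuper.eventually_ge_atTop M)
  set x0 : ℝ := max X 1 with hx0def
  have hx0pos : (0:ℝ) < x0 := lt_of_lt_of_le one_pos (le_max_right _ _)
  have hstep : ∀ u : ℝ, x0 ≤ u → M * Ψ u ≤ Ψ (u + 1) := by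
    intro u hu
    have hu1 : (1:ℝ) ≤ u := le_trans (le_max_right _ _) hu
    have hu0 : (0:ℝ) < u := by linarith
    have hΨu : 0 < Ψ u := hpos u hu0
    have h := hX (u + 1) (by have := le_trans (le_max_left X 1) hu; linarith)
    rw [show u + 1 - 1 = u by ring] at h
    calc M * Ψ u ≤ (Ψ (u + 1) / Ψ u) * Ψ u := by
          exact mul_le_mul_of_nonneg_right h hΨu.le
      _ = Ψ (u + 1) := by field_simp
  rw [eventually_atTop]
  refine ⟨x0, fun x hx => ?_⟩
  have hxpos : (0:ℝ) < x := lt_of_lt_of_le hx0pos hx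
  -- interval integrability
  have hII : ∀ a b : ℝ, x ≤ a → a ≤ b → IntervalIntegrable f volume a b := by
    intro a b ha hab
    exact (intervalIntegrable_iff_integrableOn_Ioc_of_le hab).2
      (psi_int_Ioc Ψ hpos hmono b (lt_of_lt_of_le hxpos ha))
  have hfnonneg : ∀ u : ℝ, 0 < u → 0 ≤ f u := by
    intro u hu; have := hpos u hu; positivity
  set F : ℝ → ℝ := fun y => ∫ u in y..(y+1), f u with hFdef
  have hFnonneg : ∀ y, x ≤ y → 0 ≤ F y := by
    intro y hy
    apply intervalIntegral.integral_nonneg (by linarith)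
    intro u hu
    exact hfnonneg u (by have := hu.1; linarith)
  -- one-step decay
  have step2 : ∀ y : ℝ, x ≤ y → F (y + 1) ≤ M⁻¹ * F y := by
    intro y hy
    have h1 : F (y + 1) = ∫ u in y..(y+1), f (u + 1) := by
      rw [hFdef]
      exact (intervalIntegral.integral_comp_add_right f 1).symm
    rw [h1, hFdef]
    have h2 : M⁻¹ * ∫ u in y..(y+1), f u = ∫ u in y..(y+1), M⁻¹ * f u :=
      (intervalIntegral.integral_const_mul _ _).symm
    rw [h2]
    refine intervalIntegral.integral_mono_on (by linarith) ?_ ?_ ?_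
    · have := (hII (y+1) (y+1+1) (by linarith) (by linarith))
      have h3 := this.comp_add_right 1
      simpa using h3
    · exact (hII y (y+1) hy (by linarith)).const_mul _
    · intro u hu
      have hux : x0 ≤ u := le_trans hx (le_trans hy hu.1)
      have hu0 : 0 < u := lt_of_lt_of_le hx0pos hux
      have hΨu : 0 < Ψ u := hpos u hu0
      have hs := hstep u hux
      have hMΨ : 0 < M * Ψ u := by positivity
      calc f (u + 1) = 1 / Ψ (u + 1) := rfl
        _ ≤ 1 / (M * Ψ u) := one_div_le_one_div_of_le hMΨ hs
        _ = M⁻¹ * f u := by simp only [hfdef]; field_simp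
  -- n-step decay
  have decay : ∀ n : ℕ, F (x + n) ≤ M⁻¹ ^ n * F x := by
    intro n
    induction n with
    | zero => simp
    | succ n ih =>
      have h1 : x + ((n : ℝ) + 1) = (x + n) + 1 := by ring
      push_cast
      rw [h1]
      calc F ((x + n) + 1) ≤ M⁻¹ * F (x + n) :=
            step2 _ (le_add_of_nonneg_right n.cast_nonneg)
        _ ≤ M⁻¹ * (M⁻¹ ^ n * F x) :=
            mul_le_mul_of_nonneg_left ih (by positivity)
        _ = M⁻¹ ^ (n + 1) * F x := by rw [pow_succ]; ring
  -- partial sums of the tail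
  have partial_sum : ∀ n : ℕ,
      (∫ u in (x+1)..(x+1+n), f u) ≤ (1 - M⁻¹ ^ n) / (M - 1) * F x := by
    intro n
    induction n with
    | zero => simp
    | succ n ih =>
      have hsplit : (∫ u in (x+1)..(x+1+(n:ℝ)), f u) + (∫ u in (x+1+(n:ℝ))..(x+1+((n:ℝ)+1)), f u)
          = ∫ u in (x+1)..(x+1+((n:ℝ)+1)), f u := by
        apply intervalIntegral.integral_add_adjacent_intervals
        · exact hII (x+1) (x+1+n) (by linarith) (le_add_of_nonneg_right n.cast_nonneg)
        · exact hII (x+1+n) (x+1+(n+1)) (by have := n.cast_nonneg (α := ℝ); linarith) (by linarith)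
      push_cast
      rw [← hsplit]
      have h2 : (∫ u in (x+1+(n:ℝ))..(x+1+((n:ℝ)+1)), f u) ≤ M⁻¹ ^ (n+1) * F x := by
        have := decay (n+1)
        push_cast at this
        have he : x + ((n:ℝ) + 1) = x + 1 + n := by ring
        rw [he] at this
        have he2 : x + 1 + (n:ℝ) + 1 = x + 1 + ((n:ℝ) + 1) := by ring
        rw [hFdef] at this
        simpa [he2] using this
      calc (∫ u in (x+1)..(x+1+(n:ℝ)), f u) + (∫ u in (x+1+(n:ℝ))..(x+1+((n:ℝ)+1)), f u)
          ≤ (1 - M⁻¹ ^ n) / (M - 1) * F x + M⁻¹ ^ (n+1) * F x := add_le_add ih h2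
        _ = (1 - M⁻¹ ^ (n+1)) / (M - 1) * F x := by
            field_simp
            have hM : M * M⁻¹ = 1 := mul_inv_cancel₀ hM0.ne'
            linear_combination (F x * M⁻¹ ^ n) * hM
  have hFx0 : 0 ≤ F x := hFnonneg x le_rfl
  have partial_sum' : ∀ n : ℕ,
      (∫ u in (x+1)..(x+1+n), f u) ≤ (M - 1)⁻¹ * F x := by
    intro n
    refine le_trans (partial_sum n) ?_
    have h1 : (1 - M⁻¹ ^ n) / (M - 1) ≤ (M - 1)⁻¹ := by
      rw [div_le_iff₀ (by linarith), inv_mul_cancel₀ hM1']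
      have : (0:ℝ) ≤ M⁻¹ ^ n := by positivity
      linarith
    exact mul_le_mul_of_nonneg_right h1 hFx0
  have hbtend : Tendsto (fun n : ℕ => x + 1 + (n:ℝ)) atTop atTop :=
    tendsto_atTop_add_const_left _ _ tendsto_natCast_atTop_atTop
  have htail_int : IntegrableOn f (Set.Ioi (x+1)) := by
    apply integrableOn_Ioi_of_intervalIntegral_norm_bounded ((M - 1)⁻¹ * F x) (x+1)
      (fun n : ℕ => psi_int_Ioc Ψ hpos hmono _ (by linarith)) hbtend
    refine Eventually.of_forall fun n => ?_
    have hcongr : (∫ u in (x+1)..(x+1+(n:ℝ)), ‖f u‖) = ∫ u in (x+1)..(x+1+(n:ℝ)), f u := by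
      apply intervalIntegral.integral_congr
      intro u hu
      rw [Set.uIcc_of_le (le_add_of_nonneg_right n.cast_nonneg)] at hu
      exact Real.norm_of_nonneg (hfnonneg u (by have := hu.1; linarith))
    rw [hcongr]
    exact partial_sum' n
  have htail_bound : (∫ u in Set.Ioi (x+1), f u) ≤ (M - 1)⁻¹ * F x :=
    le_of_tendsto (intervalIntegral_tendsto_integral_Ioi (x+1) htail_int hbtend)
      (Eventually.of_forall partial_sum')
  have htail_nonneg : 0 ≤ ∫ u in Set.Ioi (x+1), f u := by
    apply setIntegral_nonneg measurableSet_Ioi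
    intro u hu
    exact hfnonneg u (by have : x + 1 < u := hu; linarith)
  have hfront_int : IntegrableOn f (Set.Ioc x (x+1)) := psi_int_Ioc Ψ hpos hmono _ hxpos
  have hfront_eq : (∫ u in Set.Ioc x (x+1), f u) = F x :=
    (intervalIntegral.integral_of_le (by linarith)).symm
  have hfront_pos : 0 < ∫ u in Set.Ioc x (x+1), f u := by
    have hc : (0:ℝ) < 1 / Ψ (x+1) := by
      have := hpos (x+1) (by linarith); positivity
    have h1 : (∫ _u in Set.Ioc x (x+1), 1 / Ψ (x+1)) ≤ ∫ u in Set.Ioc x (x+1), f u := by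
      apply setIntegral_mono_on (integrableOn_const measure_Ioc_lt_top.ne)
        hfront_int measurableSet_Ioc
      intro u hu
      have hu0 : 0 < u := lt_trans hxpos hu.1
      have hΨ : Ψ u ≤ Ψ (x+1) :=
        hmono.monotoneOn (Set.mem_Ioi.2 hu0) (Set.mem_Ioi.2 (by linarith)) hu.2
      exact one_div_le_one_div_of_le (hpos u hu0) hΨ
    have h2 : (∫ _u in Set.Ioc x (x+1), 1 / Ψ (x+1)) = 1 / Ψ (x+1) := by
      rw [setIntegral_const, Real.volume_real_Ioc]
      rw [show x + 1 - x = 1 by ring]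
      simp
    linarith
  have hdecomp : (∫ u in Set.Ioi x, f u)
      = (∫ u in Set.Ioc x (x+1), f u) + ∫ u in Set.Ioi (x+1), f u := by
    rw [← Set.Ioc_union_Ioi_eq_Ioi (by linarith : x ≤ x + 1)]
    exact setIntegral_union Set.Ioc_disjoint_Ioi_same measurableSet_Ioi hfront_int htail_int
  -- final estimate
  set A := ∫ u in Set.Ioc x (x+1), f u
  set T := ∫ u in Set.Ioi (x+1), f u
  have hratio : (∫ u in Set.Ioi x, f u) / A = 1 + T / A := by
    rw [hdecomp]
    field_simp
  rw [Real.dist_eq, hratio]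
  rw [show 1 + T / A - 1 = T / A by ring, abs_of_nonneg (by positivity)]
  have hTA : T / A ≤ (M - 1)⁻¹ := by
    rw [div_le_iff₀ hfront_pos]
    calc T ≤ (M - 1)⁻¹ * F x := htail_bound
      _ = (M - 1)⁻¹ * A := by rw [hfront_eq]
  have hMε : (M - 1)⁻¹ ≤ ε / 2 := by
    have h1 : 1 + 2 / ε ≤ M := le_max_right _ _
    have h2 : (0:ℝ) < 2 / ε := by positivity
    rw [inv_le_comm₀ (by linarith) (by positivity), inv_div]
    linarith
  linarith
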